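/- Let (Ω, P) be a probability space and K ≥ 2 an integer number of arms with unique best arm * (maximal mean μ_*). Let m be a positive integer and suppose every arm i is sampled exactly m times; all samples are jointly independent, take values in [0,1], and each sample of arm i has expectation μ_i. Write Δ_i = μ_* − μ_i and let X̄_i denote the sample mean of arm i. Let J be any random arm index, measurable with respect to the samples, such that X̄_J = max_i X̄_i. Then the simple regret satisfies E[μ_* − μ_J] ≤ 2·Σ_{i ≠ *} Δ_i · exp(−Δ_i² m / 2). -/

import Mathlib

open MeasureTheory ProbabilityTheory

open Real


lemma hoeffding_core {p : ℝ} (hp0 : 0 ≤ p) (hp1 : p ≤ 1) (t : ℝ) :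
    (1 - p + p * exp t) * exp (-(t * p)) ≤ exp (t ^ 2 / 8) := by
  have hg : ∀ s : ℝ, 0 < 1 - p + p * exp s := by
    intro s
    rcases eq_or_lt_of_le hp1 with h | h
    · rw [h]; simpa using exp_pos s
    · nlinarith [exp_pos s, mul_nonneg hp0 (exp_pos s).le]
  set f : ℝ → ℝ := fun s => Real.log (1 - p + p * exp s) - s * p - s ^ 2 / 8 with hf
  set φ : ℝ → ℝ := fun s => p * exp s / (1 - p + p * exp s) - p - s / 4 with hφ
  have hgd : ∀ s : ℝ, HasDerivAt (fun s => 1 - p + p * exp s) (p * exp s) s := by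
    intro s
    simpa using ((Real.hasDerivAt_exp s).const_mul p).const_add (1 - p)
  have hfd : ∀ s : ℝ, HasDerivAt f (φ s) s := by
    intro s
    have h1 : HasDerivAt (fun s => Real.log (1 - p + p * exp s))
        (p * exp s / (1 - p + p * exp s)) s := (hgd s).log (hg s).ne'
    have h2 : HasDerivAt (fun s : ℝ => s * p) p s := by
      simpa using (hasDerivAt_id s).mul_const p
    have h3 : HasDerivAt (fun s : ℝ => s ^ 2 / 8) (s / 4) s := by
      have := (hasDerivAt_pow 2 s).div_const 8
      simpa [pow_one] using this.congr_deriv (by ring)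
    exact (h1.sub h2).sub h3
  have hφd : ∀ s : ℝ, HasDerivAt φ
      ((p * exp s * (1 - p + p * exp s) - p * exp s * (p * exp s)) /
        (1 - p + p * exp s) ^ 2 - 1 / 4) s := by
    intro s
    have h1 : HasDerivAt (fun s => p * exp s / (1 - p + p * exp s))
        ((p * exp s * (1 - p + p * exp s) - p * exp s * (p * exp s)) /
          (1 - p + p * exp s) ^ 2) s :=
      ((Real.hasDerivAt_exp s).const_mul p).div (hgd s) (hg s).ne'
    have h2 : HasDerivAt (fun s : ℝ => p + s / 4) (1 / 4) s := by
      simpa using ((hasDerivAt_id s).div_const 4).const_add p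
    refine (h1.sub h2).congr_of_eventuallyEq (Filter.Eventually.of_forall fun x => ?_)
    simp only [hφ, Pi.sub_apply]; ring
  have hφ_nonpos_deriv : ∀ s : ℝ,
      (p * exp s * (1 - p + p * exp s) - p * exp s * (p * exp s)) /
        (1 - p + p * exp s) ^ 2 - 1 / 4 ≤ 0 := by
    intro s
    have hgs := hg s
    have h4 : (p * exp s * (1 - p + p * exp s) - p * exp s * (p * exp s)) /
        (1 - p + p * exp s) ^ 2 ≤ 1 / 4 := by
      rw [div_le_iff₀ (by positivity)]
      nlinarith [sq_nonneg (1 - p - p * exp s)]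
    linarith
  have hφ_anti : Antitone φ := by
    have hd : ∀ s, deriv φ s ≤ 0 := fun s => (hφd s).deriv ▸ hφ_nonpos_deriv s
    exact antitone_of_deriv_nonpos (fun s => (hφd s).differentiableAt) hd
  have hφ0 : φ 0 = 0 := by simp [hφ]
  have hf0 : f 0 = 0 := by simp [hf]
  have hfle : ∀ s : ℝ, f s ≤ 0 := by
    intro s
    rcases le_total 0 s with hs | hs
    · have : AntitoneOn f (Set.Ici 0) := by
        refine antitoneOn_of_deriv_nonpos (convex_Ici 0)
          (fun x _ => ((hfd x).differentiableAt).continuousAt.continuousWithinAt)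
          (fun x hx => ((hfd x).differentiableAt).differentiableWithinAt) ?_
        intro x hx
        rw [(hfd x).deriv]
        calc φ x ≤ φ 0 := hφ_anti (le_of_lt (by simpa using hx))
        _ = 0 := hφ0
      calc f s ≤ f 0 := this Set.self_mem_Ici hs hs
      _ = 0 := hf0
    · have : MonotoneOn f (Set.Iic 0) := by
        refine monotoneOn_of_deriv_nonneg (convex_Iic 0)
          (fun x _ => ((hfd x).differentiableAt).continuousAt.continuousWithinAt)
          (fun x hx => ((hfd x).differentiableAt).differentiableWithinAt) ?_
        intro x hx
        rw [(hfd x).deriv]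
        calc (0:ℝ) = φ 0 := hφ0.symm
        _ ≤ φ x := hφ_anti (le_of_lt (by simpa using hx))
      calc f s ≤ f 0 := this hs Set.self_mem_Iic hs
      _ = 0 := hf0
  have key := hfle t
  have : (1 - p + p * exp t) * exp (-(t * p)) = exp (f t + t ^ 2 / 8) := by
    rw [hf]
    simp only
    rw [exp_add, sub_sub, exp_sub, exp_log (hg t), exp_add]
    field_simp [exp_ne_zero]
    ring_nf
    rw [exp_neg]
    field_simp
    ring
  rw [this]
  apply exp_le_exp.2
  have h2 : f t + t ^ 2 / 8 ≤ 0 + t ^ 2 / 8 := add_le_add_left key _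
  linarith [h2]

lemma integrable_of_mem_Icc {Ω : Type*} [MeasurableSpace Ω] {P : Measure Ω}
    [IsProbabilityMeasure P] {X : Ω → ℝ} (hm : Measurable X)
    (h01 : ∀ ω, X ω ∈ Set.Icc (0:ℝ) 1) : Integrable X P := by
  refine Integrable.mono' (integrable_const (1:ℝ)) hm.aestronglyMeasurable ?_
  filter_upwards with ω
  rw [norm_eq_abs, abs_le]
  exact ⟨by linarith [(h01 ω).1], (h01 ω).2⟩

lemma exp_integral_le {Ω : Type*} [MeasurableSpace Ω] {P : Measure Ω}
    [IsProbabilityMeasure P] {X : Ω → ℝ} (hm : Measurable X)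
    (h01 : ∀ ω, X ω ∈ Set.Icc (0:ℝ) 1) {p : ℝ} (hE : ∫ ω, X ω ∂P = p) (t : ℝ) :
    ∫ ω, exp (t * X ω) ∂P ≤ exp (t * p + t ^ 2 / 8) := by
  have hXi : Integrable X P := integrable_of_mem_Icc hm h01
  have hp0 : 0 ≤ p := hE ▸ integral_nonneg fun ω => (h01 ω).1
  have hp1 : p ≤ 1 := by
    rw [← hE]
    calc ∫ ω, X ω ∂P ≤ ∫ _, (1:ℝ) ∂P :=
          integral_mono hXi (integrable_const 1) fun ω => (h01 ω).2
    _ = 1 := by simp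
  have hpt : ∀ ω, exp (t * X ω) ≤ 1 - X ω + X ω * exp t := by
    intro ω
    obtain ⟨hx0, hx1⟩ := h01 ω
    have := convexOn_exp.2 (Set.mem_univ 0) (Set.mem_univ t)
      (by linarith : (0:ℝ) ≤ 1 - X ω) hx0 (by ring)
    simpa [smul_eq_mul, mul_comm] using this
  have hint1 : Integrable (fun ω => exp (t * X ω)) P := by
    refine Integrable.mono' (integrable_const (exp |t|)) ((hm.const_mul t).exp.aestronglyMeasurable) ?_
    filter_upwards with ω
    rw [norm_eq_abs, abs_of_pos (exp_pos _), exp_le_exp]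
    obtain ⟨hx0, hx1⟩ := h01 ω
    rcases le_total 0 t with h | h
    · calc t * X ω ≤ t * 1 := by nlinarith
      _ ≤ |t| := by rw [mul_one]; exact le_abs_self t
    · calc t * X ω ≤ 0 := by nlinarith
      _ ≤ |t| := abs_nonneg t
  have hint2 : Integrable (fun ω => 1 - X ω + X ω * exp t) P :=
    ((integrable_const (1:ℝ)).sub hXi).add (hXi.mul_const _)
  calc ∫ ω, exp (t * X ω) ∂P ≤ ∫ ω, (1 - X ω + X ω * exp t) ∂P :=
        integral_mono hint1 hint2 hpt
  _ = 1 - p + p * exp t := by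
      have hf1 : Integrable (fun ω => 1 - X ω) P := (integrable_const 1).sub hXi
      have hf2 : Integrable (fun ω => X ω * exp t) P := hXi.mul_const _
      rw [integral_add hf1 hf2, integral_sub (integrable_const 1) hXi,
        integral_mul_const, hE]
      simp
  _ = ((1 - p + p * exp t) * exp (-(t * p))) * exp (t * p) := by
      rw [mul_assoc, ← exp_add]; simp
  _ ≤ exp (t ^ 2 / 8) * exp (t * p) := by
      have h := hoeffding_core hp0 hp1 t
      have := exp_pos (t * p)
      nlinarith
  _ = exp (t * p + t ^ 2 / 8) := by rw [← exp_add]; ring_nf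

lemma chernoff_upper {Ω : Type*} [MeasurableSpace Ω] {P : Measure Ω}
    [IsProbabilityMeasure P] {n : ℕ} {Y : Fin n → Ω → ℝ}
    (hmeas : ∀ k, Measurable (Y k))
    (hindep : iIndepFun Y P)
    (h01 : ∀ k ω, Y k ω ∈ Set.Icc (0:ℝ) 1)
    {p : Fin n → ℝ} (hE : ∀ k, ∫ ω, Y k ω ∂P = p k)
    {ε : ℝ} (hε : 0 ≤ ε) :
    (P {ω | (∑ k, p k) + n * ε ≤ ∑ k, Y k ω}).toReal ≤ exp (-2 * n * ε ^ 2) := by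
  set t : ℝ := 4 * ε with hts
  have ht : 0 ≤ t := by positivity
  set S : Ω → ℝ := ∑ k, Y k with hS
  have hSapp : ∀ ω, S ω = ∑ k, Y k ω := fun ω => by simp [hS, Finset.sum_apply]
  have hint : Integrable (fun ω => exp (t * S ω)) P := by
    have hmS : Measurable S := by
      have h : S = fun ω => ∑ k, Y k ω := funext hSapp
      rw [h]
      exact Finset.measurable_sum _ fun k _ => hmeas k
    refine Integrable.mono' (integrable_const (exp (t * n)))
      ((hmS.const_mul t).exp.aestronglyMeasurable) ?_
    filter_upwards with ω
    rw [norm_eq_abs, abs_of_pos (exp_pos _), exp_le_exp]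
    have hb : S ω ≤ n := by
      rw [hSapp]
      calc ∑ k, Y k ω ≤ ∑ _k : Fin n, (1:ℝ) :=
        Finset.sum_le_sum fun k _ => (h01 k ω).2
      _ = n := by simp
    nlinarith
  have hset : {ω | (∑ k, p k) + n * ε ≤ ∑ k, Y k ω}
      = {ω | (∑ k, p k) + n * ε ≤ S ω} := by
    ext ω; simp [hSapp]
  rw [hset]
  calc (P {ω | (∑ k, p k) + n * ε ≤ S ω}).toReal
      ≤ exp (-t * ((∑ k, p k) + n * ε)) * mgf S P t :=
        measure_ge_le_exp_mul_mgf _ ht hint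
  _ ≤ exp (-t * ((∑ k, p k) + n * ε)) * exp (t * (∑ k, p k) + n * (t ^ 2 / 8)) := by
      have hmgf : mgf S P t ≤ exp (t * (∑ k, p k) + n * (t ^ 2 / 8)) := by
        rw [hS, hindep.mgf_sum hmeas]
        calc ∏ k, mgf (Y k) P t ≤ ∏ k, exp (t * p k + t ^ 2 / 8) := by
              refine Finset.prod_le_prod (fun k _ => mgf_nonneg) fun k _ => ?_
              exact exp_integral_le (hmeas k) (h01 k) (hE k) t
        _ = exp (t * (∑ k, p k) + n * (t ^ 2 / 8)) := by
              rw [← Real.exp_sum]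
              congr 1
              rw [Finset.sum_add_distrib, ← Finset.mul_sum]
              simp [mul_comm]
      exact mul_le_mul_of_nonneg_left hmgf (exp_pos _).le
  _ = exp (-2 * n * ε ^ 2) := by
      rw [← exp_add]
      congr 1
      rw [hts]
      ring

lemma iIndepFun_precomp {Ω ι κ : Type*} [MeasurableSpace Ω] {P : Measure Ω}
    {f : ι → Ω → ℝ} (h : iIndepFun f P)
    {g : κ → ι} (hg : Function.Injective g) :
    iIndepFun (fun k => f (g k)) P := by
  classical
  rw [iIndepFun_iff_measure_inter_preimage_eq_mul] at h ⊢
  intro S sets hsets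
  set sets' : ι → Set ℝ :=
    fun i => if hex : ∃ k ∈ S, g k = i then sets hex.choose else Set.univ with hsets'
  have key : ∀ k ∈ S, sets' (g k) = sets k := by
    intro k hk
    have hex : ∃ k' ∈ S, g k' = g k := ⟨k, hk, rfl⟩
    simp only [hsets', dif_pos hex]
    exact congrArg sets (hg hex.choose_spec.2)
  have H : ∀ i, i ∈ S.image g → MeasurableSet (sets' i) := by
    intro i _
    by_cases hex : ∃ k ∈ S, g k = i
    · simp only [hsets', dif_pos hex]
      exact hsets _ hex.choose_spec.1
    · simp only [hsets', dif_neg hex]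
      exact MeasurableSet.univ
  have := h (S.image g) H
  rw [Finset.set_biInter_finset_image] at this
  rw [Finset.prod_image (fun k _ k' _ e => hg e)] at this
  have hL : (⋂ k ∈ S, f (g k) ⁻¹' sets' (g k)) = ⋂ k ∈ S, f (g k) ⁻¹' sets k :=
    Set.iInter₂_congr fun k hk => by rw [key k hk]
  have hR : ∀ k ∈ S, P (f (g k) ⁻¹' sets' (g k)) = P (f (g k) ⁻¹' sets k) :=
    fun k hk => by rw [key k hk]
  rw [hL, Finset.prod_congr rfl hR] at this
  exact this

/-- Simple-regret bound for uniform sampling over `K` arms: if every arm is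
sampled exactly `m` times, then the expected simple regret of selecting an arm
with the greatest sample mean is at most `2 ∑_{i ≠ *} Δ_i exp (-Δ_i² m / 2)`. -/
theorem simple_regret_uniform_bound
    {Ω : Type*} [MeasurableSpace Ω] (P : Measure Ω) [IsProbabilityMeasure P]
    (K : ℕ) (hK : 2 ≤ K)
    (m : ℕ) (hm : 0 < m)
    (X : Fin K → Fin m → Ω → ℝ)
    (hmX : ∀ i k, Measurable (X i k))
    (hindep : iIndepFun
      (fun p : Fin K × Fin m => X p.1 p.2) P)
    (hX01 : ∀ i k ω, X i k ω ∈ Set.Icc (0 : ℝ) 1)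
    (μ : Fin K → ℝ)
    (hEX : ∀ i k, ∫ ω, X i k ω ∂P = μ i)
    (star : Fin K) (hstar : ∀ i, i ≠ star → μ i < μ star)
    (J : Ω → Fin K) (hJmeas : Measurable J)
    (hJ : ∀ ω i, (1 / m : ℝ) * ∑ k, X i k ω
        ≤ (1 / m : ℝ) * ∑ k, X (J ω) k ω) :
    ∫ ω, (μ star - μ (J ω)) ∂P
      ≤ 2 * ∑ i ∈ Finset.univ.filter (· ≠ star),
          (μ star - μ i) * Real.exp (-(μ star - μ i) ^ 2 * m / 2) := by
  classical
  -- independence within each arm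
  have harm : ∀ i : Fin K, iIndepFun (fun k => X i k) P :=
    fun i => iIndepFun_precomp hindep
      (g := fun k => (i, k)) (fun a b hab => (Prod.ext_iff.mp hab).2)
  -- upper tail for arm i
  have hA : ∀ (i : Fin K) {ε : ℝ}, 0 ≤ ε →
      (P {ω | (∑ _k : Fin m, μ i) + m * ε ≤ ∑ k, X i k ω}).toReal
        ≤ exp (-2 * m * ε ^ 2) :=
    fun i _ hε => chernoff_upper (fun k => hmX i k) (harm i)
      (fun k ω => hX01 i k ω) (fun k => hEX i k) hε
  -- lower tail for the best arm, via 1 - X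
  have hB : ∀ {ε : ℝ}, 0 ≤ ε →
      (P {ω | ∑ k, X star k ω ≤ m * μ star - m * ε}).toReal
        ≤ exp (-2 * m * ε ^ 2) := by
    intro ε hε
    set Y : Fin m → Ω → ℝ := fun k => (fun x => 1 - x) ∘ X star k with hY
    have hYmeas : ∀ k, Measurable (Y k) :=
      fun k => (measurable_const.sub measurable_id).comp (hmX star k)
    have hYindep : iIndepFun Y P :=
      (harm star).comp (fun _ => fun x => 1 - x)
        (fun _ => measurable_const.sub measurable_id)
    have hY01 : ∀ k ω, Y k ω ∈ Set.Icc (0:ℝ) 1 := by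
      intro k ω
      obtain ⟨h0, h1⟩ := hX01 star k ω
      exact ⟨by simp [hY, Function.comp]; linarith, by simp [hY, Function.comp]; linarith⟩
    have hYE : ∀ k, ∫ ω, Y k ω ∂P = 1 - μ star := by
      intro k
      have hXi : Integrable (X star k) P :=
        integrable_of_mem_Icc (hmX star k) (hX01 star k)
      have : ∫ ω, Y k ω ∂P = ∫ ω, (1 - X star k ω) ∂P := by
        simp [hY, Function.comp]
      rw [this, integral_sub (integrable_const 1) hXi, hEX star k]
      simp
    have := chernoff_upper hYmeas hYindep hY01 hYE hε
    have hset : {ω | (∑ _k : Fin m, (1 - μ star)) + m * ε ≤ ∑ k, Y k ω}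
        = {ω | ∑ k, X star k ω ≤ m * μ star - m * ε} := by
      ext ω
      have h1 : ∑ k, Y k ω = m - ∑ k, X star k ω := by
        simp [hY, Function.comp, Finset.sum_sub_distrib]
      have h2 : (∑ _k : Fin m, (1 - μ star)) = m * (1 - μ star) := by
        simp [Finset.sum_const, nsmul_eq_mul]
        ring
      simp only [Set.mem_setOf_eq, h1, h2]
      constructor <;> intro h <;> nlinarith
    rwa [hset] at this
  -- key bound on P(J = i)
  have hΔpos : ∀ i, i ≠ star → 0 < μ star - μ i := fun i hi =>
    sub_pos.2 (hstar i hi)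
  have hkey : ∀ i, i ≠ star →
      (P {ω | J ω = i}).toReal ≤ 2 * exp (-((μ star - μ i)) ^ 2 * m / 2) := by
    intro i hi
    have hε : (0:ℝ) ≤ (μ star - μ i) / 2 := by linarith [hΔpos i hi]
    set A : Set Ω := {ω | (∑ _k : Fin m, μ i) + m * ((μ star - μ i) / 2) ≤ ∑ k, X i k ω} with hAs
    set B : Set Ω := {ω | ∑ k, X star k ω ≤ m * μ star - m * ((μ star - μ i) / 2)} with hBs
    have hsub : {ω | J ω = i} ⊆ A ∪ B := by
      intro ω hω
      simp only [Set.mem_setOf_eq] at hω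
      by_contra hc
      rw [Set.mem_union] at hc
      push_neg at hc
      obtain ⟨hcA, hcB⟩ := hc
      simp only [hAs, Set.mem_setOf_eq, not_le] at hcA
      simp only [hBs, Set.mem_setOf_eq, not_le] at hcB
      have hsum : (∑ _k : Fin m, μ i) = m * μ i := by
        simp [Finset.sum_const, nsmul_eq_mul]
      rw [hsum] at hcA
      have hord : ∑ k, X star k ω ≤ ∑ k, X i k ω := by
        have := hJ ω star
        rw [hω] at this
        have hmpos : (0:ℝ) < 1 / m := by positivity
        exact le_of_mul_le_mul_left this hmpos
      have hmr : (0:ℝ) < (m:ℝ) := by exact_mod_cast hm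
      nlinarith [hcA, hcB, hord]
    have hPA := hA i hε
    have hPB := hB hε
    have hexp : exp (-2 * m * ((μ star - μ i) / 2) ^ 2) = exp (-((μ star - μ i)) ^ 2 * m / 2) := by
      congr 1; ring
    calc (P {ω | J ω = i}).toReal ≤ (P (A ∪ B)).toReal :=
          ENNReal.toReal_mono (measure_ne_top P _) (measure_mono hsub)
    _ ≤ (P A + P B).toReal :=
          ENNReal.toReal_mono
            (ENNReal.add_ne_top.2 ⟨measure_ne_top P _, measure_ne_top P _⟩)
            (measure_union_le A B)
    _ ≤ (P A).toReal + (P B).toReal := ENNReal.toReal_add_le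
    _ ≤ exp (-2 * m * ((μ star - μ i) / 2) ^ 2) + exp (-2 * m * ((μ star - μ i) / 2) ^ 2) :=
          add_le_add hPA hPB
    _ = 2 * exp (-((μ star - μ i)) ^ 2 * m / 2) := by rw [hexp]; ring
  -- rewrite the LHS as a finite sum
  haveI : IsProbabilityMeasure (P.map J) := Measure.isProbabilityMeasure_map hJmeas.aemeasurable
  have hmap : ∫ ω, (μ star - μ (J ω)) ∂P
      = ∑ i : Fin K, (P {ω | J ω = i}).toReal * (μ star - μ i) := by
    have hgm : Measurable fun i : Fin K => μ star - μ i := measurable_of_countable _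
    rw [← integral_map hJmeas.aemeasurable hgm.aestronglyMeasurable]
    rw [integral_fintype (.of_finite)]
    refine Finset.sum_congr rfl fun i _ => ?_
    rw [Measure.real_def, Measure.map_apply hJmeas (measurableSet_singleton i)]
    have : J ⁻¹' {i} = {ω | J ω = i} := by ext ω; simp
    rw [this, smul_eq_mul]
  rw [hmap]
  have hfilter : ∑ i ∈ Finset.univ.filter (· ≠ star),
      (P {ω | J ω = i}).toReal * (μ star - μ i)
      = ∑ i : Fin K, (P {ω | J ω = i}).toReal * (μ star - μ i) := by
    refine Finset.sum_filter_of_ne fun i _ hne => ?_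
    intro he
    apply hne
    rw [he]
    simp
  rw [← hfilter]
  calc ∑ i ∈ Finset.univ.filter (· ≠ star),
        (P {ω | J ω = i}).toReal * (μ star - μ i)
      ≤ ∑ i ∈ Finset.univ.filter (· ≠ star),
        (2 * exp (-((μ star - μ i)) ^ 2 * m / 2)) * (μ star - μ i) := by
        refine Finset.sum_le_sum fun i hi => ?_
        have hi' : i ≠ star := by simpa using (Finset.mem_filter.mp hi).2
        exact mul_le_mul_of_nonneg_right (hkey i hi')
          (by linarith [hΔpos i hi'])
  _ = 2 * ∑ i ∈ Finset.univ.filter (· ≠ star),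
        (μ star - μ i) * Real.exp (-(μ star - μ i) ^ 2 * m / 2) := by
        rw [Finset.mul_sum]
        refine Finset.sum_congr rfl fun i _ => ?_
        ring
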